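/- Let X be a real Hilbert space and let T : X → X be a nonexpansive map with Fix T ≠ ∅. Let (λ_n) be a sequence in [0,1] with ∑_{n∈ℕ} (1−λ_n)λ_n = +∞, let x_0 ∈ X, and define x_{n+1} := (1−λ_n)x_n + λ_n T x_n for all n. Then the sequence (x_n) satisfies x_n − T x_n → 0 strongly. -/

import Mathlib

open Filter Topology

lemma km_hilbert_id {X : Type*} [NormedAddCommGroup X] [InnerProductSpace ℝ X]
    (u v : X) (t : ℝ) :
    ‖(1 - t) • u + t • v‖ ^ 2
      = (1 - t) * ‖u‖ ^ 2 + t * ‖v‖ ^ 2 - t * (1 - t) * ‖u - v‖ ^ 2 := by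
  have hu : ‖u‖ ^ 2 = inner ℝ u u := (real_inner_self_eq_norm_sq u).symm
  have hv : ‖v‖ ^ 2 = inner ℝ v v := (real_inner_self_eq_norm_sq v).symm
  have huv : ‖u - v‖ ^ 2 = inner ℝ u u - 2 * inner ℝ u v + inner ℝ v v := by
    rw [← real_inner_self_eq_norm_sq, inner_sub_sub_self, real_inner_comm v u]; ring
  have hL : ‖(1 - t) • u + t • v‖ ^ 2
      = (1 - t) ^ 2 * inner ℝ u u + 2 * ((1 - t) * t) * inner ℝ u v + t ^ 2 * inner ℝ v v := by
    simp only [← real_inner_self_eq_norm_sq, inner_add_add_self, real_inner_smul_left,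
      real_inner_smul_right, real_inner_comm v u]
    ring
  rw [hL, hu, hv, huv]; ring

/-- **Reich's theorem (asymptotic regularity part).**
If `T` is a nonexpansive self-map of a real Hilbert space with a fixed point,
`(λₙ)` lies in `[0,1]` with `∑ (1-λₙ)λₙ = +∞`, and `xₙ₊₁ = (1-λₙ)xₙ + λₙ T xₙ`,
then `xₙ - T xₙ → 0` strongly. -/
theorem km_asymptotic_regularity
    {X : Type*} [NormedAddCommGroup X] [InnerProductSpace ℝ X] [CompleteSpace X]
    (T : X → X) (hT : ∀ x y : X, ‖T x - T y‖ ≤ ‖x - y‖)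
    (hF : (Function.fixedPoints T).Nonempty)
    (lam : ℕ → ℝ) (hlam : ∀ n, lam n ∈ Set.Icc (0 : ℝ) 1)
    (hdiv : ¬ Summable (fun n => (1 - lam n) * lam n))
    (x : ℕ → X) (hx : ∀ n, x (n + 1) = (1 - lam n) • x n + lam n • T (x n)) :
    Tendsto (fun n => x n - T (x n)) atTop (𝓝 0) := by
  obtain ⟨p, hp⟩ := hF
  have hp' : T p = p := hp
  set r : ℕ → ℝ := fun n => ‖x n - T (x n)‖ with hr
  set a : ℕ → ℝ := fun n => ‖x n - p‖ ^ 2 with ha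
  have hr0 : ∀ n, 0 ≤ r n := fun n => norm_nonneg _
  -- key inequality: a (n+1) + (1 - lam n) * lam n * r n ^ 2 ≤ a n
  have key : ∀ n, a (n + 1) + (1 - lam n) * lam n * (r n) ^ 2 ≤ a n := by
    intro n
    simp only [hr, ha]
    obtain ⟨h0, h1⟩ := hlam n
    have hdecomp : x (n + 1) - p = (1 - lam n) • (x n - p) + lam n • (T (x n) - p) := by
      rw [hx n]; module
    have hid : ‖x (n + 1) - p‖ ^ 2 = (1 - lam n) * ‖x n - p‖ ^ 2 + lam n * ‖T (x n) - p‖ ^ 2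
        - lam n * (1 - lam n) * ‖(x n - p) - (T (x n) - p)‖ ^ 2 := by
      rw [hdecomp]; exact km_hilbert_id _ _ _
    have hsub : (x n - p) - (T (x n) - p) = x n - T (x n) := by abel
    rw [hid, hsub]
    have hTn : ‖T (x n) - p‖ ^ 2 ≤ ‖x n - p‖ ^ 2 := by
      have := hT (x n) p
      rw [hp'] at this
      exact pow_le_pow_left₀ (norm_nonneg _) this 2
    have hmul : lam n * ‖T (x n) - p‖ ^ 2 ≤ lam n * ‖x n - p‖ ^ 2 :=
      mul_le_mul_of_nonneg_left hTn h0
    linarith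
  have ha0 : ∀ n, 0 ≤ a n := fun n => sq_nonneg _
  -- partial sums bounded
  have hsum : ∀ n, ∑ k ∈ Finset.range n, (1 - lam k) * lam k * (r k) ^ 2 ≤ a 0 := by
    intro n
    have : ∑ k ∈ Finset.range n, (1 - lam k) * lam k * (r k) ^ 2 ≤ a 0 - a n := by
      induction n with
      | zero => simp
      | succ m ih =>
        rw [Finset.sum_range_succ]
        have := key m
        linarith
    linarith [ha0 n]
  -- r is antitone
  have hmono : ∀ n, r (n + 1) ≤ r n := by
    intro n
    obtain ⟨h0, h1⟩ := hlam n
    have e1 : x (n + 1) - T (x n) = (1 - lam n) • (x n - T (x n)) := by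
      rw [hx n]; module
    have e2 : x n - x (n + 1) = lam n • (x n - T (x n)) := by
      rw [hx n]; module
    calc r (n + 1) = ‖(x (n+1) - T (x n)) + (T (x n) - T (x (n+1)))‖ := by
          show ‖x (n+1) - T (x (n+1))‖ = _
          congr 1; abel
      _ ≤ ‖x (n+1) - T (x n)‖ + ‖T (x n) - T (x (n+1))‖ := norm_add_le _ _
      _ ≤ ‖x (n+1) - T (x n)‖ + ‖x n - x (n+1)‖ := by linarith [hT (x n) (x (n+1))]
      _ = (1 - lam n) * r n + lam n * r n := by
          rw [e1, e2, norm_smul, norm_smul, Real.norm_eq_abs, Real.norm_eq_abs,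
            abs_of_nonneg (by linarith), abs_of_nonneg h0]
      _ = r n := by ring
  have hanti : Antitone r := antitone_nat_of_succ_le hmono
  -- r tends to 0
  have hrlim : Tendsto r atTop (𝓝 0) := by
    rw [Metric.tendsto_atTop]
    intro ε hε
    by_contra hcon
    push_neg at hcon
    have hge : ∀ n, ε ≤ r n := by
      intro n
      by_contra hlt
      push_neg at hlt
      obtain ⟨m, hm, hdist⟩ := hcon n
      have : r m ≤ r n := hanti hm
      rw [Real.dist_eq, sub_zero, abs_of_nonneg (hr0 m)] at hdist
      linarith
    -- then summable, contradiction
    apply hdiv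
    apply summable_of_sum_range_le (c := a 0 / ε ^ 2)
    · intro n
      obtain ⟨h0, h1⟩ := hlam n
      nlinarith
    · intro n
      rw [le_div_iff₀ (by positivity : (0:ℝ) < ε ^ 2)]
      have hterm : ∀ k ∈ Finset.range n,
          (1 - lam k) * lam k * ε ^ 2 ≤ (1 - lam k) * lam k * r k ^ 2 := by
        intro k _
        obtain ⟨h0, h1⟩ := hlam k
        have hεr : ε ^ 2 ≤ r k ^ 2 := pow_le_pow_left₀ hε.le (hge k) 2
        have hnn : 0 ≤ (1 - lam k) * lam k := mul_nonneg (by linarith) h0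
        exact mul_le_mul_of_nonneg_left hεr hnn
      calc (∑ k ∈ Finset.range n, (1 - lam k) * lam k) * ε ^ 2
          = ∑ k ∈ Finset.range n, (1 - lam k) * lam k * ε ^ 2 := by rw [Finset.sum_mul]
        _ ≤ ∑ k ∈ Finset.range n, (1 - lam k) * lam k * r k ^ 2 := Finset.sum_le_sum hterm
        _ ≤ a 0 := hsum n
  -- conclude
  have : Tendsto (fun n => ‖x n - T (x n)‖) atTop (𝓝 0) := hrlim
  exact tendsto_zero_iff_norm_tendsto_zero.mpr this
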